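/- Let z1, z2 be real numbers with z1 < 0 and z2 < 0, and let s ≥ 1 be a real number. Then the convergence factor of the Parareal/FIE-FIE method with two splitting terms satisfies K_{FIE-FIE}(z1, z2, s) = |(1/((1 − z1/s)(1 − z2/s)))^s − 1/((1 − z1)(1 − z2))| / (1 − |1/((1 − z1)(1 − z2))|) ≤ 1/3. -/

import Mathlib

open Real

/-- Key analytic lemma: `(4 - w) * exp (w - 1) ≤ 3 * w` for `w ≥ 1`. -/
lemma key_lemma {w : ℝ} (hw : 1 ≤ w) : (4 - w) * Real.exp (w - 1) ≤ 3 * w := by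
  set f : ℝ → ℝ := fun x => 3 * x - (4 - x) * Real.exp (x - 1) with hf
  have hderiv : ∀ x : ℝ, HasDerivAt f (3 - (3 - x) * Real.exp (x - 1)) x := by
    intro x
    have h1 : HasDerivAt (fun x : ℝ => Real.exp (x - 1)) (Real.exp (x - 1)) x := by
      simpa using ((hasDerivAt_id' x).sub_const 1).exp
    have h2 : HasDerivAt (fun x : ℝ => (4 - x) * Real.exp (x - 1))
        ((0 - 1) * Real.exp (x - 1) + (4 - x) * Real.exp (x - 1)) x :=
      ((hasDerivAt_const x (4:ℝ)).sub (hasDerivAt_id x)).mul h1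
    have h3 : HasDerivAt (fun x : ℝ => 3 * x) 3 x := by
      simpa using (hasDerivAt_id x).const_mul (3:ℝ)
    have h4 := h3.sub h2
    refine h4.congr_deriv ?_
    ring
  have hpos : ∀ x : ℝ, 0 < 3 - (3 - x) * Real.exp (x - 1) := by
    intro x
    have hb : (3 - x) ≤ Real.exp (2 - x) := by
      have := Real.add_one_le_exp (2 - x)
      linarith
    have hexp : (0:ℝ) < Real.exp (x - 1) := Real.exp_pos _
    have hm : (3 - x) * Real.exp (x - 1) ≤ Real.exp (2 - x) * Real.exp (x - 1) :=
      mul_le_mul_of_nonneg_right hb hexp.le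
    rw [← Real.exp_add] at hm
    have h1 : (2 - x) + (x - 1) = 1 := by ring
    rw [h1] at hm
    have he : Real.exp 1 < 3 := by
      have := Real.exp_one_lt_d9
      linarith
    linarith
  have hmono : StrictMono f := strictMono_of_hasDerivAt_pos hderiv hpos
  have h0 : f 1 = 0 := by norm_num [hf]
  have hle : f 1 ≤ f w := (hmono.le_iff_le).2 hw
  rw [h0] at hle
  simp only [hf] at hle
  linarith

/-- Convergence factor bound for the Parareal/FIE-FIE method with two splitting terms. -/
theorem parareal_FIE_FIE_conv_factor_two_terms
    (z1 z2 s : ℝ) (h1 : z1 < 0) (h2 : z2 < 0) (hs : 1 ≤ s) :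
    |(1 / ((1 - z1 / s) * (1 - z2 / s))) ^ s - 1 / ((1 - z1) * (1 - z2))| /
      (1 - |1 / ((1 - z1) * (1 - z2))|) ≤ 1 / 3 := by
  have hs0 : (0:ℝ) < s := lt_of_lt_of_le one_pos hs
  have hp1 : 1 < 1 - z1 / s := by
    have : z1 / s < 0 := div_neg_of_neg_of_pos h1 hs0
    linarith
  have hp2 : 1 < 1 - z2 / s := by
    have : z2 / s < 0 := div_neg_of_neg_of_pos h2 hs0
    linarith
  have hu : 1 < 1 - z1 := by linarith
  have hv : 1 < 1 - z2 := by linarith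
  set u := 1 - z1 with hu_def
  set v := 1 - z2 with hv_def
  set p1 := 1 - z1 / s with hp1_def
  set p2 := 1 - z2 / s with hp2_def
  have hp1pos : (0:ℝ) < p1 := by linarith
  have hp2pos : (0:ℝ) < p2 := by linarith
  have hw1 : 1 < u * v := one_lt_mul (le_of_lt hu) hv
  have hw0 : (0:ℝ) < u * v := by linarith
  set b := 1 / (u * v) with hb_def
  have hb_pos : 0 < b := by positivity
  have hb_lt : b < 1 := by
    rw [hb_def, div_lt_one hw0]; exact hw1
  have habsb : |b| = b := abs_of_pos hb_pos
  -- rewrite the rpow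
  have hform : (1 / (p1 * p2)) ^ s = (p1 ^ s * p2 ^ s)⁻¹ := by
    rw [one_div, Real.inv_rpow (by positivity), Real.mul_rpow hp1pos.le hp2pos.le]
  set A := p1 ^ s * p2 ^ s with hA_def
  have hp1s_pos : 0 < p1 ^ s := Real.rpow_pos_of_pos hp1pos s
  have hp2s_pos : 0 < p2 ^ s := Real.rpow_pos_of_pos hp2pos s
  have hA_pos : 0 < A := by positivity
  -- Bernoulli: u ≤ p1 ^ s
  have bern1 : u ≤ p1 ^ s := by
    have hge : (-1:ℝ) ≤ -z1 / s := by
      have : 0 ≤ -z1 / s := div_nonneg (by linarith) hs0.le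
      linarith
    have := one_add_mul_self_le_rpow_one_add hge hs
    have he1 : 1 + s * (-z1 / s) = u := by
      field_simp [hu_def]; ring
    have he2 : (1 + -z1 / s) = p1 := by
      rw [hp1_def]; ring
    rw [he1, he2] at this
    exact this
  have bern2 : v ≤ p2 ^ s := by
    have hge : (-1:ℝ) ≤ -z2 / s := by
      have : 0 ≤ -z2 / s := div_nonneg (by linarith) hs0.le
      linarith
    have := one_add_mul_self_le_rpow_one_add hge hs
    have he1 : 1 + s * (-z2 / s) = v := by
      field_simp [hv_def]; ring
    have he2 : (1 + -z2 / s) = p2 := by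
      rw [hp2_def]; ring
    rw [he1, he2] at this
    exact this
  -- exp bounds: p1 ^ s ≤ exp (-z1)
  have hexp1 : p1 ^ s ≤ Real.exp (-z1) := by
    rw [Real.rpow_def_of_pos hp1pos]
    apply Real.exp_le_exp.2
    have hlog : Real.log p1 ≤ p1 - 1 := Real.log_le_sub_one_of_pos hp1pos
    have : s * Real.log p1 ≤ s * (p1 - 1) := by
      exact mul_le_mul_of_nonneg_left hlog hs0.le
    have he : s * (p1 - 1) = -z1 := by
      rw [hp1_def]; field_simp; ring
    linarith
  have hexp2 : p2 ^ s ≤ Real.exp (-z2) := by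
    rw [Real.rpow_def_of_pos hp2pos]
    apply Real.exp_le_exp.2
    have hlog : Real.log p2 ≤ p2 - 1 := Real.log_le_sub_one_of_pos hp2pos
    have : s * Real.log p2 ≤ s * (p2 - 1) := by
      exact mul_le_mul_of_nonneg_left hlog hs0.le
    have he : s * (p2 - 1) = -z2 := by
      rw [hp2_def]; field_simp; ring
    linarith
  -- A⁻¹ ≤ b
  have hAinv_le_b : A⁻¹ ≤ b := by
    rw [hb_def, one_div]
    apply inv_anti₀ hw0
    calc u * v ≤ p1 ^ s * (p2 ^ s) :=
      mul_le_mul bern1 bern2 (by linarith) hp1s_pos.le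
    _ = A := rfl
  -- exp (z1 + z2) ≤ A⁻¹
  have hexp_le_Ainv : Real.exp (z1 + z2) ≤ A⁻¹ := by
    have hAle : A ≤ Real.exp (-(z1 + z2)) := by
      have : A ≤ Real.exp (-z1) * Real.exp (-z2) :=
        mul_le_mul hexp1 hexp2 hp2s_pos.le (Real.exp_pos _).le
      rw [← Real.exp_add] at this
      convert this using 2
      ring
    have h6 : (Real.exp (-(z1 + z2)))⁻¹ ≤ A⁻¹ := inv_anti₀ hA_pos hAle
    rw [← Real.exp_neg, neg_neg] at h6
    exact h6
  -- key inequality: 4 * b - 1 ≤ 3 * exp (1 - u * v)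
  have hkey : 4 * b - 1 ≤ 3 * Real.exp (1 - u * v) := by
    have hk := key_lemma hw1.le
    have hE : Real.exp (u * v - 1) * Real.exp (1 - u * v) = 1 := by
      rw [← Real.exp_add]
      norm_num
    have hEpos : 0 < Real.exp (1 - u * v) := Real.exp_pos _
    -- (4 - w) ≤ 3 w exp(1 - w)
    have h4 : 4 - u * v ≤ 3 * (u * v) * Real.exp (1 - u * v) := by
      have := mul_le_mul_of_nonneg_right hk hEpos.le
      rw [mul_assoc, hE, mul_one] at this
      linarith
    have hbw : b * (u * v) = 1 := by
      rw [hb_def]; field_simp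
    nlinarith [h4, hbw, hw0, hEpos, mul_pos hw0 hEpos]
  -- exp (1 - u*v) ≤ exp (z1 + z2)
  have hexp_mono : Real.exp (1 - u * v) ≤ Real.exp (z1 + z2) := by
    apply Real.exp_le_exp.2
    have h5 : z1 + z2 = 2 - u - v := by
      rw [hu_def, hv_def]; ring
    nlinarith [mul_nonneg (by linarith : (0:ℝ) ≤ u - 1) (by linarith : (0:ℝ) ≤ v - 1)]
  -- conclude
  rw [hform, habsb]
  have hAinv_pos : 0 < A⁻¹ := by positivity
  have habs : |A⁻¹ - b| = b - A⁻¹ := by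
    rw [abs_of_nonpos (by linarith)]
    ring
  rw [habs, div_le_iff₀ (by linarith : (0:ℝ) < 1 - b)]
  linarith
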